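/- Let d, n be positive integers with n ≥ 4, let σ² = 1/d, and let x₁, …, xₙ be independent random vectors in ℝᵈ, each with i.i.d. N(0, σ²) coordinates. Let S₁, S₂, S₃ be pairwise disjoint subsets of {1,…,n}. There is a universal constant c > 0 such that for every β > 1 and every δ ∈ (0, 1/10), if √d ≥ c·β·log²(nd/δ), then with probability at least 1 − δ the following holds simultaneously: for all indices i₁ ∈ S₁, all distinct i₂, i₂′ ∈ S₂, and all i₃ ∈ S₃, |⟨x_{i₃} + x_{i₁}, x_{i₃} + x_{i₂}⟩| ≥ β · |⟨x_{i₃} + x_{i₁}, x_{i₂} + x_{i₂′}⟩|. -/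

import Mathlib

open MeasureTheory ProbabilityTheory Real
open scoped NNReal ENNReal

-- from w1.lean
variable {v : ℝ≥0}

lemma gaussianReal_eq_withDensity (hv : v ≠ 0) :
    gaussianReal 0 v = volume.withDensity
      (fun x => ((gaussianPDFReal 0 v x).toNNReal : ℝ≥0∞)) := by
  rw [gaussianReal_of_var_ne_zero _ hv]
  congr 1

lemma integral_gaussianReal_transfer (hv : v ≠ 0) (f : ℝ → ℝ) :
    ∫ x, f x ∂(gaussianReal 0 v) = ∫ x, gaussianPDFReal 0 v x * f x := by
  rw [gaussianReal_eq_withDensity hv,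
    integral_withDensity_eq_integral_smul
      ((measurable_gaussianPDFReal 0 v).real_toNNReal) f]
  congr 1 with x
  simp [NNReal.smul_def, Real.coe_toNNReal _ (gaussianPDFReal_nonneg 0 v x)]

lemma integrable_gaussianReal_transfer (hv : v ≠ 0) (f : ℝ → ℝ)
    (h : Integrable (fun x => gaussianPDFReal 0 v x * f x)) :
    Integrable f (gaussianReal 0 v) := by
  rw [gaussianReal_eq_withDensity hv,
    integrable_withDensity_iff_integrable_smul
      ((measurable_gaussianPDFReal 0 v).real_toNNReal)]
  refine h.congr (Filter.Eventually.of_forall fun x => ?_)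
  simp [NNReal.smul_def, Real.coe_toNNReal _ (gaussianPDFReal_nonneg 0 v x)]

-- from w2.lean
variable {v : ℝ≥0}

lemma gaussPDF_quad_identity (hv : v ≠ 0) {l : ℝ} (hl : 2 * l * v < 1) (x : ℝ) :
    gaussianPDFReal 0 v x * rexp (l * x ^ 2) =
      (Real.sqrt (1 - 2 * l * v))⁻¹ *
        gaussianPDFReal 0 ⟨v / (1 - 2 * l * v),
          div_nonneg v.coe_nonneg (by linarith)⟩ x := by
  have hv' : (0:ℝ) < v := lt_of_le_of_ne v.coe_nonneg (by exact_mod_cast (Ne.symm hv))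
  have ha : (0:ℝ) < 1 - 2 * l * v := by linarith
  have hs : (0:ℝ) < Real.sqrt (2 * π * v) := Real.sqrt_pos.mpr (by positivity)
  have ht : (0:ℝ) < Real.sqrt (1 - 2 * l * v) := Real.sqrt_pos.mpr ha
  simp only [gaussianPDFReal, sub_zero, NNReal.coe_mk]
  change _ = (Real.sqrt (1 - 2 * l * v))⁻¹ * ((Real.sqrt (2 * π * ((v:ℝ) / (1 - 2 * l * v))))⁻¹ * rexp (-x ^ 2 / (2 * ((v:ℝ) / (1 - 2 * l * v)))))
  have h1 : Real.sqrt (2 * π * (v / (1 - 2 * l * v)))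
      = Real.sqrt (2 * π * v) / Real.sqrt (1 - 2 * l * v) := by
    rw [show 2 * π * ((v:ℝ) / (1 - 2 * l * v)) = (2 * π * v) / (1 - 2 * l * v) by ring,
      Real.sqrt_div (by positivity)]
  have hexp : -x ^ 2 / (2 * (v:ℝ)) + l * x ^ 2
      = -x ^ 2 / (2 * ((v:ℝ) / (1 - 2 * l * v))) := by
    field_simp
    ring
  rw [mul_assoc, ← Real.exp_add, hexp, h1]
  field_simp
  rw [show (2:ℝ) * v * l = 2 * l * v by ring, div_self ht.ne']

-- from w3.lean
variable {v : ℝ≥0}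

lemma integrable_exp_quad_gaussian (hv : v ≠ 0) {l : ℝ} (hl : 2 * l * v < 1) :
    Integrable (fun x => rexp (l * x ^ 2)) (gaussianReal 0 v) := by
  refine integrable_gaussianReal_transfer hv _ ?_
  have := (integrable_gaussianPDFReal 0
    (⟨v / (1 - 2 * l * v), div_nonneg v.coe_nonneg (by linarith)⟩ : ℝ≥0)).const_mul
    (Real.sqrt (1 - 2 * l * v))⁻¹
  exact this.congr (Filter.Eventually.of_forall fun x =>
    (gaussPDF_quad_identity hv hl x).symm)

lemma integral_exp_quad_gaussian (hv : v ≠ 0) {l : ℝ} (hl : 2 * l * v < 1) :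
    ∫ x, rexp (l * x ^ 2) ∂(gaussianReal 0 v)
      = (Real.sqrt (1 - 2 * l * v))⁻¹ := by
  have hv' : (0:ℝ) < v := lt_of_le_of_ne v.coe_nonneg (by exact_mod_cast (Ne.symm hv))
  have hvne : (⟨v / (1 - 2 * l * v), div_nonneg v.coe_nonneg (by linarith)⟩ : ℝ≥0) ≠ 0 := by
    intro h
    have := congrArg NNReal.toReal h
    change (v:ℝ) / (1 - 2 * l * v) = 0 at this
    have ha : (0:ℝ) < 1 - 2 * l * v := by linarith
    rw [div_eq_zero_iff] at this
    rcases this with h1 | h1 <;> linarith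
  rw [integral_gaussianReal_transfer hv]
  simp_rw [fun x => gaussPDF_quad_identity hv hl x]
  rw [integral_const_mul, integral_gaussianPDFReal_eq_one _ hvne, mul_one]

-- from w4.lean
variable {v : ℝ≥0}

lemma gaussPDF_lin_identity (hv : v ≠ 0) (s x : ℝ) :
    gaussianPDFReal 0 v x * rexp (s * x) =
      rexp (v * s ^ 2 / 2) * gaussianPDFReal (s * v) v x := by
  have hv' : (0:ℝ) < v := lt_of_le_of_ne v.coe_nonneg (by exact_mod_cast (Ne.symm hv))
  simp only [gaussianPDFReal, sub_zero]
  rw [mul_assoc, ← Real.exp_add, show rexp ((v:ℝ) * s ^ 2 / 2) *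
    ((Real.sqrt (2 * π * v))⁻¹ * rexp (-(x - s * v) ^ 2 / (2 * v)))
    = (Real.sqrt (2 * π * v))⁻¹ * (rexp ((v:ℝ) * s ^ 2 / 2) * rexp (-(x - s * v) ^ 2 / (2 * v)))
    by ring, ← Real.exp_add]
  congr 1
  field_simp
  ring

lemma integrable_exp_lin_gaussian (hv : v ≠ 0) (s : ℝ) :
    Integrable (fun x => rexp (s * x)) (gaussianReal 0 v) := by
  refine integrable_gaussianReal_transfer hv _ ?_
  have := (integrable_gaussianPDFReal (s * v) v).const_mul (rexp (v * s ^ 2 / 2))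
  exact this.congr (Filter.Eventually.of_forall fun x => (gaussPDF_lin_identity hv s x).symm)

lemma integral_exp_lin_gaussian (hv : v ≠ 0) (s : ℝ) :
    ∫ x, rexp (s * x) ∂(gaussianReal 0 v) = rexp (v * s ^ 2 / 2) := by
  rw [integral_gaussianReal_transfer hv]
  simp_rw [fun x => gaussPDF_lin_identity hv s x]
  rw [integral_const_mul, integral_gaussianPDFReal_eq_one _ hv, mul_one]

-- from w5.lean
lemma pi_integral_prod_dep {d : ℕ} (μ : Measure ℝ) [SigmaFinite μ]
    (f : Fin d → ℝ → ℝ) :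
    ∫ ω : Fin d → ℝ, ∏ j, f j (ω j) ∂(Measure.pi fun _ => μ)
      = ∏ j, ∫ x, f j x ∂μ := by
  letI : MeasureSpace ℝ := ⟨μ⟩
  exact MeasureTheory.integral_fintype_prod_eq_prod f

lemma pi_integrable_prod_dep {d : ℕ} (μ : Measure ℝ) [SigmaFinite μ]
    (f : Fin d → ℝ → ℝ) (hf : ∀ j, Integrable (f j) μ) :
    Integrable (fun ω : Fin d → ℝ => ∏ j, f j (ω j)) (Measure.pi fun _ => μ) := by
  letI : MeasureSpace ℝ := ⟨μ⟩
  exact Integrable.fintype_prod_dep hf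

-- from w6.lean
-- (I1)
lemma one_sub_inv_le_exp {u : ℝ} (h0 : 0 ≤ u) (h1 : u ≤ 1/4) :
    (1 - u)⁻¹ ≤ rexp (u + 4 * u ^ 2) := by
  have hu1 : u + 4 * u ^ 2 ≤ 1 := by nlinarith
  have key : rexp (-(u + 4 * u ^ 2)) ≤ 1 - u := by
    have h := Real.abs_exp_sub_one_sub_id_le (x := -(u + 4 * u ^ 2)) (by
      rw [abs_neg, abs_of_nonneg (by positivity)]; exact hu1)
    have h2 : rexp (-(u + 4 * u ^ 2)) ≤ 1 + (-(u + 4*u^2)) + (-(u + 4*u^2))^2 := by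
      have := abs_le.mp h
      linarith [this.2]
    nlinarith [h2, mul_nonneg (mul_nonneg h0 h0) (sub_nonneg.mpr h1)]
  have := inv_anti₀ (Real.exp_pos (-(u + 4 * u ^ 2))) key
  rwa [← Real.exp_neg, neg_neg] at this

-- (I2)
lemma one_add_inv_le_exp {u : ℝ} (h0 : 0 ≤ u) :
    (1 + u)⁻¹ ≤ rexp (-(u - u ^ 2)) := by
  have h1 : (0:ℝ) < 1 + u := by linarith
  have hlog : u - u ^ 2 ≤ Real.log (1 + u) := by
    have h2 : Real.log (1+u)⁻¹ ≤ (1+u)⁻¹ - 1 := Real.log_le_sub_one_of_pos (by positivity)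
    rw [Real.log_inv] at h2
    have heq : (1+u)⁻¹ - 1 = -(u/(1+u)) := by field_simp; ring
    have h3 : u / (1+u) ≤ Real.log (1+u) := by rw [heq] at h2; linarith
    have h4 : u - u^2 ≤ u / (1+u) := by
      rw [← sub_nonneg]
      have : u/(1+u) - (u-u^2) = u^3/(1+u) := by field_simp; ring
      rw [this]; positivity
    linarith
  calc (1+u)⁻¹ = rexp (-(Real.log (1+u))) := by
        rw [Real.exp_neg, Real.exp_log h1]
    _ ≤ rexp (-(u - u^2)) := by apply Real.exp_le_exp.mpr; linarith

-- from w8.lean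
lemma sqrt_exp_half (y : ℝ) : Real.sqrt (rexp y) = rexp (y / 2) := by
  rw [show rexp y = (rexp (y/2))^2 by rw [sq, ← Real.exp_add]; ring_nf,
    Real.sqrt_sq (Real.exp_pos _).le]

lemma sqrt_one_add_inv_pow_le {u : ℝ} (h0 : 0 ≤ u) (d : ℕ) :
    ((Real.sqrt (1 + u))⁻¹) ^ d ≤ rexp (-(d:ℝ) * (u - u ^ 2) / 2) := by
  have h1 : (Real.sqrt (1 + u))⁻¹ ≤ rexp (-(u - u ^ 2) / 2) := by
    rw [← Real.sqrt_inv, ← sqrt_exp_half]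
    exact Real.sqrt_le_sqrt (one_add_inv_le_exp h0)
  calc ((Real.sqrt (1 + u))⁻¹) ^ d ≤ (rexp (-(u - u ^ 2) / 2)) ^ d := by
        apply pow_le_pow_left₀ (by positivity) h1
    _ = rexp (-(d:ℝ) * (u - u ^ 2) / 2) := by
        rw [← Real.exp_nat_mul]; ring_nf

lemma sqrt_one_sub_inv_pow_le {u : ℝ} (h0 : 0 ≤ u) (h1 : u ≤ 1/4) (d : ℕ) :
    ((Real.sqrt (1 - u))⁻¹) ^ d ≤ rexp ((d:ℝ) * (u + 4 * u ^ 2) / 2) := by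
  have h2 : (Real.sqrt (1 - u))⁻¹ ≤ rexp ((u + 4 * u ^ 2) / 2) := by
    rw [← Real.sqrt_inv, ← sqrt_exp_half]
    exact Real.sqrt_le_sqrt (one_sub_inv_le_exp h0 h1)
  calc ((Real.sqrt (1 - u))⁻¹) ^ d ≤ (rexp ((u + 4 * u ^ 2) / 2)) ^ d := by
        apply pow_le_pow_left₀ (by positivity) h2
    _ = rexp ((d:ℝ) * (u + 4 * u ^ 2) / 2) := by
        rw [← Real.exp_nat_mul]; ring_nf

-- from w7.lean
variable {v : ℝ≥0} {d : ℕ}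

lemma exp_mul_sum_sq (l : ℝ) (ω : Fin d → ℝ) :
    rexp (l * ∑ j, ω j ^ 2) = ∏ j, rexp (l * ω j ^ 2) := by
  rw [Finset.mul_sum, Real.exp_sum]

lemma chiSq_integrable (hv : v ≠ 0) {l : ℝ} (hl : 2 * l * v < 1) :
    Integrable (fun ω : Fin d → ℝ => rexp (l * ∑ j, ω j ^ 2))
      (Measure.pi fun _ => gaussianReal 0 v) := by
  simp_rw [exp_mul_sum_sq]
  exact pi_integrable_prod_dep _ _ fun j => integrable_exp_quad_gaussian hv hl

lemma chiSq_integral (hv : v ≠ 0) {l : ℝ} (hl : 2 * l * v < 1) :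
    ∫ ω : Fin d → ℝ, rexp (l * ∑ j, ω j ^ 2) ∂(Measure.pi fun _ => gaussianReal 0 v)
      = ((Real.sqrt (1 - 2 * l * v))⁻¹) ^ d := by
  simp_rw [exp_mul_sum_sq]
  rw [pi_integral_prod_dep (gaussianReal 0 v) (fun _ x => rexp (l * x ^ 2))]
  simp [integral_exp_quad_gaussian hv hl]

-- from w9.lean
lemma chiSq_lower_tail {d : ℕ} (hd : 0 < d) {v : ℝ≥0} (hv : v ≠ 0) (hvd : (v:ℝ) = 1/d)
    {ε : ℝ} (hε : 0 ≤ ε) :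
    ((Measure.pi fun _ : Fin d => gaussianReal 0 v)
        {ω | ∑ j, ω j ^ 2 ≤ 1 - ε}).toReal
      ≤ rexp (-(d:ℝ) * ε ^ 2 / 8) := by
  have hd' : (0:ℝ) < d := Nat.cast_pos.mpr hd
  set l : ℝ := ε * d / 4 with hl_def
  have hl0 : 0 ≤ l := by positivity
  have hlv : 2 * (-l) * (v:ℝ) < 1 := by
    rw [hvd]; have : 2 * (-l) * (1/(d:ℝ)) ≤ 0 := by
      rw [mul_one_div]; apply div_nonpos_of_nonpos_of_nonneg <;> nlinarith
    linarith
  have h_int := chiSq_integrable (d := d) hv hlv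
  have chern := measure_le_le_exp_mul_mgf (μ := Measure.pi fun _ : Fin d => gaussianReal 0 v)
    (X := fun ω => ∑ j, ω j ^ 2) (1 - ε) (t := -l) (by linarith) h_int
  have hmgf : mgf (fun ω : Fin d → ℝ => ∑ j, ω j ^ 2)
      (Measure.pi fun _ => gaussianReal 0 v) (-l)
      = ((Real.sqrt (1 + 2 * l * v))⁻¹) ^ d := by
    simp only [mgf]
    rw [chiSq_integral hv hlv]
    norm_num
  rw [hmgf] at chern
  have hu : (0:ℝ) ≤ 2 * l * v := by positivity
  have hbound := sqrt_one_add_inv_pow_le hu d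
  have h2lv : 2 * l * (v:ℝ) = ε / 2 := by
    rw [hvd, hl_def]; field_simp; ring
  calc ((Measure.pi fun _ : Fin d => gaussianReal 0 v)
        {ω | ∑ j, ω j ^ 2 ≤ 1 - ε}).toReal
      ≤ rexp (-(-l) * (1 - ε)) * ((Real.sqrt (1 + 2 * l * v))⁻¹) ^ d := chern
    _ ≤ rexp (-(-l) * (1 - ε)) * rexp (-(d:ℝ) * (2*l*v - (2*l*v) ^ 2) / 2) := by
        apply mul_le_mul_of_nonneg_left hbound (Real.exp_pos _).le
    _ = rexp (-(-l) * (1 - ε) + -(d:ℝ) * (2*l*v - (2*l*v) ^ 2) / 2) := by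
        rw [← Real.exp_add]
    _ ≤ rexp (-(d:ℝ) * ε ^ 2 / 8) := by
        apply Real.exp_le_exp.mpr
        rw [h2lv, hl_def]
        ring_nf
        nlinarith [hd', hε]

-- from w10.lean
variable {v : ℝ≥0} {d : ℕ}

-- measurability of the inner-product exponential
lemma meas_exp_inner (l : ℝ) :
    Measurable (fun p : (Fin d → ℝ) × (Fin d → ℝ) => rexp (l * ∑ j, p.1 j * p.2 j)) := by
  apply Measurable.exp
  apply Measurable.const_mul
  exact Finset.measurable_sum _ fun j _ =>
    ((measurable_pi_apply j).comp measurable_fst).mul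
      ((measurable_pi_apply j).comp measurable_snd)

-- inner integral over w for fixed z
lemma inner_integral_w (hv : v ≠ 0) (l : ℝ) (z : Fin d → ℝ) :
    ∫ w : Fin d → ℝ, rexp (l * ∑ j, z j * w j) ∂(Measure.pi fun _ => gaussianReal 0 v)
      = rexp ((v * l ^ 2 / 2) * ∑ j, z j ^ 2) := by
  have h1 : ∀ w : Fin d → ℝ, rexp (l * ∑ j, z j * w j)
      = ∏ j, rexp ((l * z j) * w j) := by
    intro w
    rw [← Real.exp_sum, Finset.mul_sum]
    congr 1
    exact Finset.sum_congr rfl fun j _ => by ring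
  simp_rw [h1]
  rw [pi_integral_prod_dep (gaussianReal 0 v) (fun j x => rexp ((l * z j) * x))]
  simp_rw [integral_exp_lin_gaussian hv]
  rw [← Real.exp_sum]
  congr 1
  rw [Finset.mul_sum]
  exact Finset.sum_congr rfl fun j _ => by ring

lemma inner_integrable_w (hv : v ≠ 0) (l : ℝ) (z : Fin d → ℝ) :
    Integrable (fun w : Fin d → ℝ => rexp (l * ∑ j, z j * w j))
      (Measure.pi fun _ => gaussianReal 0 v) := by
  have h1 : ∀ w : Fin d → ℝ, rexp (l * ∑ j, z j * w j)
      = ∏ j, rexp ((l * z j) * w j) := by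
    intro w
    rw [← Real.exp_sum, Finset.mul_sum]
    congr 1
    exact Finset.sum_congr rfl fun j _ => by ring
  simp_rw [h1]
  exact pi_integrable_prod_dep _ _ fun j => integrable_exp_lin_gaussian hv _

lemma inner_mgf_integrable (hv : v ≠ 0) {l : ℝ} (hl2 : 2 * (v * l ^ 2 / 2) * v < 1) :
    Integrable (fun p : (Fin d → ℝ) × (Fin d → ℝ) => rexp (l * ∑ j, p.1 j * p.2 j))
      ((Measure.pi fun _ : Fin d => gaussianReal 0 v).prod
        (Measure.pi fun _ : Fin d => gaussianReal 0 v)) := by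
  rw [integrable_prod_iff (meas_exp_inner l).aestronglyMeasurable]
  constructor
  · exact Filter.Eventually.of_forall fun z => inner_integrable_w hv l z
  · have : ∀ z : Fin d → ℝ,
        (∫ w, ‖rexp (l * ∑ j, z j * w j)‖ ∂(Measure.pi fun _ : Fin d => gaussianReal 0 v))
          = rexp ((v * l ^ 2 / 2) * ∑ j, z j ^ 2) := by
      intro z
      simp_rw [Real.norm_eq_abs, abs_of_pos (Real.exp_pos _)]
      exact inner_integral_w hv l z
    simp_rw [this]
    exact chiSq_integrable hv hl2

lemma inner_mgf_integral (hv : v ≠ 0) {l : ℝ} (hl2 : 2 * (v * l ^ 2 / 2) * v < 1) :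
    ∫ p, rexp (l * ∑ j, p.1 j * p.2 j)
        ∂((Measure.pi fun _ : Fin d => gaussianReal 0 v).prod
          (Measure.pi fun _ : Fin d => gaussianReal 0 v))
      = ((Real.sqrt (1 - (v:ℝ) ^ 2 * l ^ 2))⁻¹) ^ d := by
  rw [integral_prod _ (inner_mgf_integrable hv hl2)]
  simp_rw [inner_integral_w hv l]
  rw [chiSq_integral hv hl2]
  congr 3
  ring

-- from w11.lean
lemma inner_tail {d : ℕ} (hd : 0 < d) {v : ℝ≥0} (hv : v ≠ 0) (hvd : (v:ℝ) = 1/d)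
    {t : ℝ} (h0 : 0 ≤ t) (h1 : t ≤ 1/4) :
    (((Measure.pi fun _ : Fin d => gaussianReal 0 v).prod
        (Measure.pi fun _ : Fin d => gaussianReal 0 v))
        {p | t ≤ |∑ j, p.1 j * p.2 j|}).toReal
      ≤ 2 * rexp (-(d:ℝ) * t ^ 2 / 4) := by
  have hd' : (0:ℝ) < d := Nat.cast_pos.mpr hd
  set ν := Measure.pi fun _ : Fin d => gaussianReal 0 v with hν
  set l : ℝ := t * d with hl_def
  have hl0 : 0 ≤ l := by positivity
  have hvl : (v:ℝ) * l = t := by rw [hvd, hl_def]; field_simp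
  have hl2 : 2 * ((v:ℝ) * l ^ 2 / 2) * v < 1 := by
    have : 2 * ((v:ℝ) * l ^ 2 / 2) * v = ((v:ℝ)*l)^2 := by ring
    rw [this, hvl]; nlinarith
  have hl2' : 2 * ((v:ℝ) * (-l) ^ 2 / 2) * v < 1 := by
    have : 2 * ((v:ℝ) * (-l) ^ 2 / 2) * v = ((v:ℝ)*l)^2 := by ring
    rw [this, hvl]; nlinarith
  have hmgf_bound : ∀ l' : ℝ, l' ^ 2 = l ^ 2 → 2 * ((v:ℝ) * l' ^ 2 / 2) * v < 1 →
      mgf (fun p : (Fin d → ℝ) × (Fin d → ℝ) => ∑ j, p.1 j * p.2 j) (ν.prod ν) l'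
        ≤ rexp ((d:ℝ) * (t^2 + 4 * t^4) / 2) := by
    intro l' hsq hlt
    have : mgf (fun p : (Fin d → ℝ) × (Fin d → ℝ) => ∑ j, p.1 j * p.2 j) (ν.prod ν) l'
        = ((Real.sqrt (1 - (v:ℝ) ^ 2 * l' ^ 2))⁻¹) ^ d := by
      simp only [mgf]
      exact inner_mgf_integral hv hlt
    rw [this, hsq]
    have hv2l2 : (v:ℝ)^2 * l^2 = t^2 := by
      rw [show (v:ℝ)^2*l^2 = ((v:ℝ)*l)^2 by ring, hvl]
    rw [hv2l2]
    have ht2 : (0:ℝ) ≤ t^2 := sq_nonneg t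
    have ht2' : t^2 ≤ 1/4 := by nlinarith
    calc ((Real.sqrt (1 - t^2))⁻¹) ^ d ≤ rexp ((d:ℝ) * (t^2 + 4 * (t^2)^2) / 2) :=
          sqrt_one_sub_inv_pow_le ht2 ht2' d
      _ = rexp ((d:ℝ) * (t^2 + 4 * t^4) / 2) := by ring_nf
  have hup : ((ν.prod ν) {p | t ≤ ∑ j, p.1 j * p.2 j}).toReal
      ≤ rexp (-(d:ℝ) * t ^ 2 / 4) := by
    have chern := measure_ge_le_exp_mul_mgf (μ := ν.prod ν)
      (X := fun p : (Fin d → ℝ) × (Fin d → ℝ) => ∑ j, p.1 j * p.2 j) t hl0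
      (inner_mgf_integrable hv hl2)
    refine chern.trans ?_
    calc rexp (-l * t) * mgf _ (ν.prod ν) l
        ≤ rexp (-l * t) * rexp ((d:ℝ) * (t^2 + 4 * t^4) / 2) := by
          exact mul_le_mul_of_nonneg_left (hmgf_bound l rfl hl2) (Real.exp_pos _).le
      _ = rexp (-l * t + (d:ℝ) * (t^2 + 4 * t^4) / 2) := by rw [← Real.exp_add]
      _ ≤ rexp (-(d:ℝ) * t ^ 2 / 4) := by
          apply Real.exp_le_exp.mpr
          rw [hl_def]
          have hkey : (0:ℝ) ≤ (d:ℝ) * (t^2 * (1/4 - 2*t^2)) :=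
            mul_nonneg hd'.le (mul_nonneg (sq_nonneg t) (by nlinarith))
          nlinarith [hkey]
  have hlow : ((ν.prod ν) {p | (∑ j, p.1 j * p.2 j) ≤ -t}).toReal
      ≤ rexp (-(d:ℝ) * t ^ 2 / 4) := by
    have chern := measure_le_le_exp_mul_mgf (μ := ν.prod ν)
      (X := fun p : (Fin d → ℝ) × (Fin d → ℝ) => ∑ j, p.1 j * p.2 j) (-t)
      (t := -l) (by linarith)
      (inner_mgf_integrable hv hl2')
    refine chern.trans ?_
    calc rexp (-(-l) * (-t)) * mgf _ (ν.prod ν) (-l)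
        ≤ rexp (-(-l) * (-t)) * rexp ((d:ℝ) * (t^2 + 4 * t^4) / 2) := by
          exact mul_le_mul_of_nonneg_left (hmgf_bound (-l) (by ring) hl2') (Real.exp_pos _).le
      _ = rexp (-(-l) * (-t) + (d:ℝ) * (t^2 + 4 * t^4) / 2) := by rw [← Real.exp_add]
      _ ≤ rexp (-(d:ℝ) * t ^ 2 / 4) := by
          apply Real.exp_le_exp.mpr
          rw [hl_def]
          have hkey : (0:ℝ) ≤ (d:ℝ) * (t^2 * (1/4 - 2*t^2)) :=
            mul_nonneg hd'.le (mul_nonneg (sq_nonneg t) (by nlinarith))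
          nlinarith [hkey]
  have hsub : {p : (Fin d → ℝ) × (Fin d → ℝ) | t ≤ |∑ j, p.1 j * p.2 j|}
      ⊆ {p | t ≤ ∑ j, p.1 j * p.2 j} ∪ {p | (∑ j, p.1 j * p.2 j) ≤ -t} := by
    intro p hp
    simp only [Set.mem_setOf_eq, Set.mem_union] at *
    rcases abs_cases (∑ j, p.1 j * p.2 j) with ⟨h, _⟩ | ⟨h, _⟩
    · left; linarith
    · right; linarith
  have h1' : ((ν.prod ν) {p | t ≤ |∑ j, p.1 j * p.2 j|}).toReal
      ≤ ((ν.prod ν) {p | t ≤ ∑ j, p.1 j * p.2 j}).toReal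
        + ((ν.prod ν) {p | (∑ j, p.1 j * p.2 j) ≤ -t}).toReal := by
    rw [← ENNReal.toReal_add (measure_ne_top _ _) (measure_ne_top _ _)]
    exact ENNReal.toReal_mono
      (by exact ENNReal.add_ne_top.mpr ⟨measure_ne_top _ _, measure_ne_top _ _⟩)
      ((measure_mono hsub).trans (measure_union_le _ _))
  linarith

-- from w12.lean
variable {Ω : Type} [MeasureSpace Ω] {d n : ℕ}

lemma aemeasurable_of_map_gaussian {v : ℝ≥0} {f : Ω → Fin d → ℝ}
    (h : Measure.map f ℙ = Measure.pi (fun _ : Fin d => gaussianReal 0 v)) :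
    AEMeasurable f ℙ := by
  by_contra hc
  rw [Measure.map_of_not_aemeasurable hc] at h
  have : (Measure.pi (fun _ : Fin d => gaussianReal 0 v)) Set.univ = 1 :=
    measure_univ
  rw [← h] at this
  simp at this

lemma pair_tail (hd : 0 < d) [IsProbabilityMeasure (ℙ : Measure Ω)]
    {x : Fin n → Ω → (Fin d → ℝ)}
    (hindep : iIndepFun x ℙ)
    (hmap : ∀ i, Measure.map (x i) ℙ =
      Measure.pi (fun _ : Fin d => gaussianReal 0 (1 / d : ℝ≥0)))
    {a b : Fin n} (hab : a ≠ b) {t : ℝ} (h0 : 0 ≤ t) (h1 : t ≤ 1/4) :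
    ((ℙ : Measure Ω) {ω | t ≤ |∑ j, x a ω j * x b ω j|}).toReal
      ≤ 2 * rexp (-(d:ℝ) * t ^ 2 / 4) := by
  have hvne : (1 / d : ℝ≥0) ≠ 0 := by
    rw [Ne, div_eq_zero_iff]
    push_neg
    exact ⟨one_ne_zero, Nat.cast_ne_zero.mpr hd.ne'⟩
  have hvd : ((1 / d : ℝ≥0) : ℝ) = 1 / (d:ℝ) := by
    push_cast
    rfl
  have ha := aemeasurable_of_map_gaussian (hmap a)
  have hb := aemeasurable_of_map_gaussian (hmap b)
  have hIndep : IndepFun (x a) (x b) ℙ := hindep.indepFun hab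
  have hjoint : Measure.map (fun ω => (x a ω, x b ω)) ℙ
      = (Measure.pi fun _ : Fin d => gaussianReal 0 (1 / d : ℝ≥0)).prod
        (Measure.pi fun _ : Fin d => gaussianReal 0 (1 / d : ℝ≥0)) := by
    exact ((indepFun_iff_map_prod_eq_prod_map_map ha hb).mp hIndep).trans
      (by rw [hmap a, hmap b])
  have hAmeas : MeasurableSet {p : (Fin d → ℝ) × (Fin d → ℝ) | t ≤ |∑ j, p.1 j * p.2 j|} := by
    apply measurableSet_le measurable_const
    apply Measurable.abs
    exact Finset.measurable_sum _ fun j _ =>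
      ((measurable_pi_apply j).comp measurable_fst).mul
        ((measurable_pi_apply j).comp measurable_snd)
  have hpre : {ω | t ≤ |∑ j, x a ω j * x b ω j|}
      = (fun ω => (x a ω, x b ω)) ⁻¹'
        {p : (Fin d → ℝ) × (Fin d → ℝ) | t ≤ |∑ j, p.1 j * p.2 j|} := rfl
  rw [hpre, ← Measure.map_apply_of_aemeasurable (ha.prodMk hb) hAmeas, hjoint]
  exact inner_tail hd hvne hvd h0 h1

lemma norm_tail (hd : 0 < d) [IsProbabilityMeasure (ℙ : Measure Ω)]
    {x : Fin n → Ω → (Fin d → ℝ)}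
    (hmap : ∀ i, Measure.map (x i) ℙ =
      Measure.pi (fun _ : Fin d => gaussianReal 0 (1 / d : ℝ≥0)))
    (a : Fin n) {ε : ℝ} (hε : 0 ≤ ε) :
    ((ℙ : Measure Ω) {ω | ∑ j, x a ω j ^ 2 ≤ 1 - ε}).toReal
      ≤ rexp (-(d:ℝ) * ε ^ 2 / 8) := by
  have hvne : (1 / d : ℝ≥0) ≠ 0 := by
    rw [Ne, div_eq_zero_iff]
    push_neg
    exact ⟨one_ne_zero, Nat.cast_ne_zero.mpr hd.ne'⟩
  have hvd : ((1 / d : ℝ≥0) : ℝ) = 1 / (d:ℝ) := by push_cast; rfl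
  have ha := aemeasurable_of_map_gaussian (hmap a)
  have hAmeas : MeasurableSet {ω : Fin d → ℝ | ∑ j, ω j ^ 2 ≤ 1 - ε} := by
    apply measurableSet_le _ measurable_const
    exact Finset.measurable_sum _ fun j _ => (measurable_pi_apply j).pow_const 2
  have hpre : {ω | ∑ j, x a ω j ^ 2 ≤ 1 - ε}
      = x a ⁻¹' {ω : Fin d → ℝ | ∑ j, ω j ^ 2 ≤ 1 - ε} := rfl
  rw [hpre, ← Measure.map_apply_of_aemeasurable ha hAmeas, hmap a]
  exact chiSq_lower_tail hd hvne hvd hε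

-- from w13.lean
set_option maxHeartbeats 1000000 in
/-- Corollary A.2: when the ambient dimension `d` is large enough relative to `β` and
`log (n d / δ)`, inner products between mixtures sharing a common image exceed those of
mixtures of four distinct images by any prescribed factor `β`. -/
theorem mixup_multiple_use_detection :
    ∃ c : ℝ, 0 < c ∧
      ∀ (d n : ℕ), 0 < d → 4 ≤ n →
      ∀ (Ω : Type) (_ : MeasureSpace Ω),
        IsProbabilityMeasure (ℙ : Measure Ω) →
      ∀ x : Fin n → Ω → (Fin d → ℝ),
        iIndepFun x ℙ →
        (∀ i, Measure.map (x i) ℙ =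
          Measure.pi (fun _ : Fin d => gaussianReal 0 (1 / d : ℝ≥0))) →
      ∀ S₁ S₂ S₃ : Finset (Fin n),
        Disjoint S₁ S₂ → Disjoint S₁ S₃ → Disjoint S₂ S₃ →
      ∀ β : ℝ, 1 < β →
      ∀ δ : ℝ, 0 < δ → δ < 1 / 10 →
        c * β * (Real.log (n * d / δ)) ^ 2 ≤ Real.sqrt d →
        1 - δ ≤
          (ℙ {ω : Ω | ∀ i₁ ∈ S₁, ∀ i₂ ∈ S₂, ∀ i₂' ∈ S₂, i₂ ≠ i₂' → ∀ i₃ ∈ S₃,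
            β * |∑ j, (x i₃ ω j + x i₁ ω j) * (x i₂ ω j + x i₂' ω j)| ≤
              |∑ j, (x i₃ ω j + x i₁ ω j) * (x i₃ ω j + x i₂ ω j)|}).toReal := by
  refine ⟨100, by norm_num, ?_⟩
  intro d n hd hn Ω _ hprob x hindep hmap S₁ S₂ S₃ h12 h13 h23 β hβ δ hδ0 hδ1 hc
  haveI := hprob
  have hβ0 : (0:ℝ) < β := by linarith
  set t0 : ℝ := 1/(40*β) with ht0_def
  set ε : ℝ := 2*t0 with hε_def
  have ht0 : 0 < t0 := by positivity
  have ht0_le : t0 ≤ 1/40 := by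
    rw [ht0_def]
    rw [div_le_div_iff₀ (by positivity) (by norm_num)]
    linarith
  have ht04 : t0 ≤ 1/4 := by linarith
  have hε0 : 0 ≤ ε := by positivity
  set P : Fin n → Fin n → Set Ω :=
    fun a b => {ω | t0 ≤ |∑ j, x a ω j * x b ω j|} with hP_def
  set N : Fin n → Set Ω := fun a => {ω | ∑ j, x a ω j ^ 2 ≤ 1 - ε} with hN_def
  set Bad : Set Ω := (⋃ a, ⋃ b, ⋃ (_ : a ≠ b), P a b) ∪ ⋃ a, N a with hBad_def
  -- deterministic part
  have hdet : Badᶜ ⊆ {ω : Ω | ∀ i₁ ∈ S₁, ∀ i₂ ∈ S₂, ∀ i₂' ∈ S₂, i₂ ≠ i₂' → ∀ i₃ ∈ S₃,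
      β * |∑ j, (x i₃ ω j + x i₁ ω j) * (x i₂ ω j + x i₂' ω j)| ≤
        |∑ j, (x i₃ ω j + x i₁ ω j) * (x i₃ ω j + x i₂ ω j)|} := by
    intro ω hω
    have hPg : ∀ a b, a ≠ b → |∑ j, x a ω j * x b ω j| < t0 := by
      intro a b hab
      by_contra hcon
      push_neg at hcon
      exact hω (Or.inl (Set.mem_iUnion.mpr ⟨a, Set.mem_iUnion.mpr ⟨b,
        Set.mem_iUnion.mpr ⟨hab, hcon⟩⟩⟩))
    have hNg : ∀ a, 1 - ε < ∑ j, x a ω j ^ 2 := by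
      intro a
      by_contra hcon
      push_neg at hcon
      exact hω (Or.inr (Set.mem_iUnion.mpr ⟨a, hcon⟩))
    simp only [Set.mem_setOf_eq]
    intro i₁ hi₁ i₂ hi₂ i₂' hi₂' h22 i₃ hi₃
    have h1ne2 : i₁ ≠ i₂ := fun h => Finset.disjoint_left.mp h12 hi₁ (h ▸ hi₂)
    have h1ne2' : i₁ ≠ i₂' := fun h => Finset.disjoint_left.mp h12 hi₁ (h ▸ hi₂')
    have h1ne3 : i₁ ≠ i₃ := fun h => Finset.disjoint_left.mp h13 hi₁ (h ▸ hi₃)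
    have h3ne2 : i₃ ≠ i₂ := fun h => Finset.disjoint_left.mp h23 hi₂ (h ▸ hi₃)
    have h3ne2' : i₃ ≠ i₂' := fun h => Finset.disjoint_left.mp h23 hi₂' (h ▸ hi₃)
    have hsum1 : ∑ j, (x i₃ ω j + x i₁ ω j) * (x i₂ ω j + x i₂' ω j)
        = (∑ j, x i₃ ω j * x i₂ ω j) + (∑ j, x i₃ ω j * x i₂' ω j)
          + (∑ j, x i₁ ω j * x i₂ ω j) + (∑ j, x i₁ ω j * x i₂' ω j) := by
      rw [← Finset.sum_add_distrib, ← Finset.sum_add_distrib, ← Finset.sum_add_distrib]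
      exact Finset.sum_congr rfl fun j _ => by ring
    have hsum2 : ∑ j, (x i₃ ω j + x i₁ ω j) * (x i₃ ω j + x i₂ ω j)
        = (∑ j, x i₃ ω j ^ 2) + ((∑ j, x i₃ ω j * x i₂ ω j)
          + (∑ j, x i₁ ω j * x i₃ ω j) + (∑ j, x i₁ ω j * x i₂ ω j)) := by
      rw [← Finset.sum_add_distrib, ← Finset.sum_add_distrib, ← Finset.sum_add_distrib]
      exact Finset.sum_congr rfl fun j _ => by ring
    have b32 := hPg i₃ i₂ h3ne2
    have b32' := hPg i₃ i₂' h3ne2'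
    have b12 := hPg i₁ i₂ h1ne2
    have b12' := hPg i₁ i₂' h1ne2'
    have b13 := hPg i₁ i₃ h1ne3
    have bQ := hNg i₃
    have habs1 : |∑ j, (x i₃ ω j + x i₁ ω j) * (x i₂ ω j + x i₂' ω j)| ≤ 4 * t0 := by
      rw [hsum1]
      calc |(∑ j, x i₃ ω j * x i₂ ω j) + (∑ j, x i₃ ω j * x i₂' ω j)
          + (∑ j, x i₁ ω j * x i₂ ω j) + (∑ j, x i₁ ω j * x i₂' ω j)|
          ≤ |(∑ j, x i₃ ω j * x i₂ ω j) + (∑ j, x i₃ ω j * x i₂' ω j)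
            + (∑ j, x i₁ ω j * x i₂ ω j)| + |∑ j, x i₁ ω j * x i₂' ω j| := abs_add_le _ _
        _ ≤ |(∑ j, x i₃ ω j * x i₂ ω j) + (∑ j, x i₃ ω j * x i₂' ω j)|
            + |∑ j, x i₁ ω j * x i₂ ω j| + |∑ j, x i₁ ω j * x i₂' ω j| := by
            have := abs_add_le ((∑ j, x i₃ ω j * x i₂ ω j) + (∑ j, x i₃ ω j * x i₂' ω j))
              (∑ j, x i₁ ω j * x i₂ ω j)
            linarith
        _ ≤ |∑ j, x i₃ ω j * x i₂ ω j| + |∑ j, x i₃ ω j * x i₂' ω j|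
            + |∑ j, x i₁ ω j * x i₂ ω j| + |∑ j, x i₁ ω j * x i₂' ω j| := by
            have := abs_add_le (∑ j, x i₃ ω j * x i₂ ω j) (∑ j, x i₃ ω j * x i₂' ω j)
            linarith
        _ ≤ 4 * t0 := by linarith
    have habs2 : 1 - 5 * t0 ≤ |∑ j, (x i₃ ω j + x i₁ ω j) * (x i₃ ω j + x i₂ ω j)| := by
      have h32 := neg_abs_le (∑ j, x i₃ ω j * x i₂ ω j)
      have h13' := neg_abs_le (∑ j, x i₁ ω j * x i₃ ω j)
      have h12'' := neg_abs_le (∑ j, x i₁ ω j * x i₂ ω j)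
      have b13' := hPg i₁ i₃ h1ne3
      rw [hsum2]
      have hle := le_abs_self ((∑ j, x i₃ ω j ^ 2) + ((∑ j, x i₃ ω j * x i₂ ω j)
          + (∑ j, x i₁ ω j * x i₃ ω j) + (∑ j, x i₁ ω j * x i₂ ω j)))
      have hεt : ε = 2 * t0 := hε_def
      linarith
    have hβ4t0 : β * (4 * t0) = 1/10 := by
      rw [ht0_def]
      field_simp
      ring
    calc β * |∑ j, (x i₃ ω j + x i₁ ω j) * (x i₂ ω j + x i₂' ω j)|
        ≤ β * (4 * t0) := by
          exact mul_le_mul_of_nonneg_left habs1 hβ0.le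
      _ = 1/10 := hβ4t0
      _ ≤ 1 - 5 * t0 := by linarith
      _ ≤ |∑ j, (x i₃ ω j + x i₁ ω j) * (x i₃ ω j + x i₂ ω j)| := habs2
  -- probability part
  set e1 : ℝ := rexp (-(d:ℝ) * t0 ^ 2 / 4) with he1_def
  set e2 : ℝ := rexp (-(d:ℝ) * ε ^ 2 / 8) with he2_def
  have he1pos : 0 < e1 := Real.exp_pos _
  have he2pos : 0 < e2 := Real.exp_pos _
  have hd1 : (1:ℝ) ≤ d := by exact_mod_cast hd
  have hn4 : (4:ℝ) ≤ n := by exact_mod_cast hn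
  have hn0 : (0:ℝ) < n := by linarith
  have hA0 : (0:ℝ) < (n:ℝ) * d / δ := by positivity
  set L : ℝ := Real.log ((n:ℝ) * d / δ) with hL_def
  have hL3 : (3:ℝ) ≤ L := by
    rw [hL_def, Real.le_log_iff_exp_le hA0]
    have hexp3 : rexp 3 ≤ 40 := by
      have h1 := Real.exp_one_lt_d9
      have h3 : rexp 3 = rexp 1 ^ 3 := by
        rw [show (3:ℝ) = ((3:ℕ):ℝ) * (1:ℝ) by norm_num, Real.exp_nat_mul]
      have h4 : rexp 1 ^ 3 < (2.7182818286:ℝ) ^ 3 :=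
        pow_lt_pow_left₀ h1 (Real.exp_pos 1).le (by norm_num)
      have h5 : (2.7182818286:ℝ) ^ 3 ≤ 40 := by norm_num
      linarith
    have hA40 : (40:ℝ) ≤ (n:ℝ) * d / δ := by
      rw [le_div_iff₀ hδ0]
      nlinarith
    linarith
  have hdL : 10000 * β ^ 2 * L ^ 4 ≤ (d:ℝ) := by
    have h0 : (0:ℝ) ≤ 100 * β * L ^ 2 := by positivity
    have hsq := mul_self_le_mul_self h0 hc
    rw [Real.mul_self_sqrt (Nat.cast_nonneg d)] at hsq
    nlinarith [hsq]
  have hkey : Real.log (3 * (n:ℝ) ^ 2 / δ) ≤ (d:ℝ) * t0 ^ 2 / 4 := by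
    have harg : 3 * (n:ℝ) ^ 2 / δ ≤ ((n:ℝ) * d / δ) ^ 2 := by
      have hdd : (3:ℝ) ≤ (d:ℝ)^2 / δ := by
        rw [le_div_iff₀ hδ0]
        nlinarith
      calc 3 * (n:ℝ) ^ 2 / δ = ((n:ℝ)^2/δ) * 3 := by ring
        _ ≤ ((n:ℝ)^2/δ) * ((d:ℝ)^2/δ) :=
            mul_le_mul_of_nonneg_left hdd (by positivity)
        _ = ((n:ℝ) * d / δ) ^ 2 := by ring
    have hlog1 : Real.log (3 * (n:ℝ) ^ 2 / δ) ≤ 2 * L := by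
      calc Real.log (3 * (n:ℝ) ^ 2 / δ) ≤ Real.log (((n:ℝ) * d / δ) ^ 2) :=
            Real.log_le_log (by positivity) harg
        _ = 2 * L := by rw [Real.log_pow]; push_cast; ring
    have ht0sq : (d:ℝ) * t0 ^ 2 / 4 = (d:ℝ) / (6400 * β ^ 2) := by
      rw [ht0_def, div_pow, one_pow, show ((40:ℝ)*β)^2 = 1600*β^2 by ring,
        mul_one_div, div_div]
      congr 1
      ring
    rw [ht0sq, le_div_iff₀ (by positivity)]
    have hLpos : (0:ℝ) < L := by linarith
    have hL9 : (9:ℝ) ≤ L ^ 2 := by nlinarith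
    have hL27c : (27:ℝ) ≤ L ^ 3 := by nlinarith
    have hL27 : 27 * L ≤ L ^ 4 := by nlinarith [hL27c, hLpos]
    have hL4 : 12800 * β ^ 2 * L ≤ 10000 * β ^ 2 * L ^ 4 := by
      nlinarith [hL27, mul_pos hβ0 hβ0, hLpos]
    nlinarith [hL4, hdL, hlog1]
  have he1small : e1 ≤ δ / (3 * (n:ℝ) ^ 2) := by
    rw [he1_def]
    calc rexp (-(d:ℝ) * t0 ^ 2 / 4) ≤ rexp (-(Real.log (3 * (n:ℝ) ^ 2 / δ))) := by
          apply Real.exp_le_exp.mpr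
          linarith
      _ = δ / (3 * (n:ℝ) ^ 2) := by
          rw [Real.exp_neg, Real.exp_log (by positivity), inv_div]
  have he21 : e2 ≤ e1 := by
    rw [he1_def, he2_def]
    apply Real.exp_le_exp.mpr
    rw [hε_def]
    nlinarith [sq_nonneg t0, hd1, mul_nonneg (by linarith : (0:ℝ) ≤ (d:ℝ)) (sq_nonneg t0)]
  have hreal : (n:ℝ) * ((n:ℝ) * (2 * e1)) + n * e2 ≤ δ := by
    have he1small' : e1 ≤ δ / (3 * ((n:ℝ) * (n:ℝ))) := by
      rw [show (3:ℝ) * ((n:ℝ) * (n:ℝ)) = 3 * (n:ℝ)^2 by ring]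
      exact he1small
    have hne2 : (n:ℝ) * e2 ≤ (n:ℝ) * e1 := mul_le_mul_of_nonneg_left he21 hn0.le
    have hnn : (n:ℝ) * e1 ≤ (n:ℝ) * (n:ℝ) * e1 := by
      have ha1 : (0:ℝ) ≤ (n:ℝ) - 1 := by linarith
      have ha2 : (0:ℝ) ≤ ((n:ℝ) - 1) * (n:ℝ) * e1 :=
        mul_nonneg (mul_nonneg ha1 hn0.le) he1pos.le
      nlinarith [ha2]
    calc (n:ℝ) * ((n:ℝ) * (2 * e1)) + n * e2
        ≤ (n:ℝ) * ((n:ℝ) * (2 * e1)) + (n:ℝ) * (n:ℝ) * e1 := by linarith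
      _ = 3 * ((n:ℝ) * (n:ℝ)) * e1 := by ring
      _ ≤ 3 * ((n:ℝ) * (n:ℝ)) * (δ / (3 * ((n:ℝ) * (n:ℝ)))) :=
          mul_le_mul_of_nonneg_left he1small' (by positivity)
      _ = δ := by field_simp
  have hr1 : (0:ℝ) ≤ 2 * e1 := by positivity
  have hPb : ∀ a b : Fin n, (ℙ (⋃ (_ : a ≠ b), P a b)) ≤ ENNReal.ofReal (2 * e1) := by
    intro a b
    by_cases hab : a = b
    · have hempty : (⋃ (_ : a ≠ b), P a b) = ∅ := by simp [hab]
      rw [hempty]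
      simp
    · refine le_trans (measure_mono (Set.iUnion_subset fun _ => subset_rfl)) ?_
      rw [ENNReal.le_ofReal_iff_toReal_le (measure_ne_top _ _) hr1]
      exact pair_tail hd hindep hmap hab ht0.le ht04
  have hNb : ∀ a : Fin n, ℙ (N a) ≤ ENNReal.ofReal e2 := by
    intro a
    rw [ENNReal.le_ofReal_iff_toReal_le (measure_ne_top _ _) he2pos.le]
    exact norm_tail hd hmap a hε0
  have hBadBound : ℙ Bad ≤ ENNReal.ofReal δ := by
    have step1 : ℙ Bad ≤ (∑' a : Fin n, ∑' b : Fin n, ℙ (⋃ (_ : a ≠ b), P a b))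
        + ∑' a : Fin n, ℙ (N a) := by
      refine le_trans (measure_union_le _ _) (add_le_add ?_ (measure_iUnion_le _))
      refine le_trans (measure_iUnion_le _) ?_
      exact Summable.tsum_le_tsum (fun a => measure_iUnion_le _) ENNReal.summable ENNReal.summable
    have step2 : (∑' a : Fin n, ∑' b : Fin n, ℙ (⋃ (_ : a ≠ b), P a b))
        + ∑' a : Fin n, ℙ (N a)
        ≤ (n : ℝ≥0∞) * ((n : ℝ≥0∞) * ENNReal.ofReal (2 * e1))
          + (n : ℝ≥0∞) * ENNReal.ofReal e2 := by
      apply add_le_add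
      · calc (∑' a : Fin n, ∑' b : Fin n, ℙ (⋃ (_ : a ≠ b), P a b))
            ≤ ∑' _ : Fin n, ∑' _ : Fin n, ENNReal.ofReal (2 * e1) := by
              refine Summable.tsum_le_tsum (fun a => ?_) ENNReal.summable ENNReal.summable
              exact Summable.tsum_le_tsum (fun b => hPb a b) ENNReal.summable ENNReal.summable
          _ = (n : ℝ≥0∞) * ((n : ℝ≥0∞) * ENNReal.ofReal (2 * e1)) := by
              rw [tsum_fintype, tsum_fintype]
              simp [Finset.sum_const, Finset.card_univ, mul_comm]
      · calc (∑' a : Fin n, ℙ (N a)) ≤ ∑' _ : Fin n, ENNReal.ofReal e2 :=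
              Summable.tsum_le_tsum (fun a => hNb a) ENNReal.summable ENNReal.summable
          _ = (n : ℝ≥0∞) * ENNReal.ofReal e2 := by
              rw [tsum_fintype]
              simp [Finset.sum_const, Finset.card_univ, mul_comm]
    have step3 : ENNReal.ofReal ((n:ℝ) * ((n:ℝ) * (2 * e1)) + (n:ℝ) * e2)
        = (n : ℝ≥0∞) * ((n : ℝ≥0∞) * ENNReal.ofReal (2 * e1))
          + (n : ℝ≥0∞) * ENNReal.ofReal e2 := by
      rw [ENNReal.ofReal_add (by positivity) (by positivity),
        ENNReal.ofReal_mul (p := (n:ℝ)) (by positivity),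
        ENNReal.ofReal_mul (p := (n:ℝ)) (by positivity),
        ENNReal.ofReal_mul (p := (n:ℝ)) (by positivity),
        ENNReal.ofReal_natCast]
    refine le_trans (le_trans step1 step2) ?_
    rw [← step3]
    exact ENNReal.ofReal_le_ofReal hreal
  have hq : (ℙ Bad).toReal ≤ δ := ENNReal.toReal_le_of_le_ofReal hδ0.le hBadBound
  have huniv : (1:ℝ) ≤ (ℙ Bad).toReal + (ℙ Badᶜ).toReal := by
    have h := measure_union_le (μ := (ℙ : Measure Ω)) Bad Badᶜ
    rw [Set.union_compl_self] at h
    have h2 : ((ℙ : Measure Ω) Set.univ).toReal = 1 := by simp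
    calc (1:ℝ) = ((ℙ : Measure Ω) Set.univ).toReal := h2.symm
      _ ≤ (ℙ Bad + ℙ Badᶜ).toReal := ENNReal.toReal_mono
          (ENNReal.add_ne_top.mpr ⟨measure_ne_top _ _, measure_ne_top _ _⟩) h
      _ = (ℙ Bad).toReal + (ℙ Badᶜ).toReal :=
          ENNReal.toReal_add (measure_ne_top _ _) (measure_ne_top _ _)
  have hmono : (ℙ Badᶜ).toReal ≤ (ℙ {ω : Ω | ∀ i₁ ∈ S₁, ∀ i₂ ∈ S₂, ∀ i₂' ∈ S₂, i₂ ≠ i₂' → ∀ i₃ ∈ S₃,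
      β * |∑ j, (x i₃ ω j + x i₁ ω j) * (x i₂ ω j + x i₂' ω j)| ≤
        |∑ j, (x i₃ ω j + x i₁ ω j) * (x i₃ ω j + x i₂ ω j)|}).toReal :=
    ENNReal.toReal_mono (measure_ne_top _ _) (measure_mono hdet)
  linarith
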